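/- For n ≥ 1, sptbar2(n) is odd if and only if n is an even perfect square or twice a perfect square. -/

import Mathlib

open scoped Classical

/-- The number of smallest parts of a multiset of positive integers
(the multiplicity of the minimum; `0` for the empty multiset). -/
noncomputable def numSmallest (M : Multiset ℕ) : ℕ :=
  (M.filter fun a => ∀ b ∈ M, a ≤ b).card

/-- `sptbar2 n` : the total number of smallest parts, summed over all overpartitions of `n`
whose smallest part is even and not overlined. -/
noncomputable def sptbar2 (n : ℕ) : ℕ :=
  ∑ p : Nat.Partition n, ∑ S ∈ p.parts.toFinset.powerset,
    if (∀ a ∈ S, ∃ b ∈ p.parts, b < a) ∧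
        (∃ a ∈ p.parts, (∀ b ∈ p.parts, a ≤ b) ∧ Even a) then
      numSmallest p.parts else 0

lemma numSmallest_replicate (k m : ℕ) : numSmallest (Multiset.replicate k m) = k := by
  unfold numSmallest
  rw [Multiset.filter_eq_self.2, Multiset.card_replicate]
  intro a ha b hb
  rw [Multiset.eq_of_mem_replicate ha, Multiset.eq_of_mem_replicate hb]

/-- The inner sum of `sptbar2` evaluated. -/
lemma inner_sum_eq (n : ℕ) (p : Nat.Partition n) :
    (∑ S ∈ p.parts.toFinset.powerset,
      if (∀ a ∈ S, ∃ b ∈ p.parts, b < a) ∧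
          (∃ a ∈ p.parts, (∀ b ∈ p.parts, a ≤ b) ∧ Even a) then
        numSmallest p.parts else 0)
      = if (∃ a ∈ p.parts, (∀ b ∈ p.parts, a ≤ b) ∧ Even a) then
          numSmallest p.parts * 2 ^ (p.parts.toFinset.card - 1) else 0 := by
  by_cases hc : ∃ a ∈ p.parts, (∀ b ∈ p.parts, a ≤ b) ∧ Even a
  · rw [if_pos hc]
    obtain ⟨m, hm, hmin, _⟩ := hc
    have hstep : ∀ S ∈ p.parts.toFinset.powerset,
        (if (∀ a ∈ S, ∃ b ∈ p.parts, b < a) ∧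
            (∃ a ∈ p.parts, (∀ b ∈ p.parts, a ≤ b) ∧ Even a) then
          numSmallest p.parts else 0)
        = (if (∀ a ∈ S, ∃ b ∈ p.parts, b < a) then numSmallest p.parts else 0) := by
      intro S _
      congr 1
      rw [and_iff_left ⟨m, hm, hmin, ‹Even m›⟩]
    rw [Finset.sum_congr rfl hstep, ← Finset.sum_filter]
    have hset : p.parts.toFinset.powerset.filter (fun S => ∀ a ∈ S, ∃ b ∈ p.parts, b < a)
        = (p.parts.toFinset.filter fun a => ∃ b ∈ p.parts, b < a).powerset := by
      ext S
      simp only [Finset.mem_filter, Finset.mem_powerset, Finset.subset_iff, Finset.mem_filter]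
      constructor
      · rintro ⟨hsub, hall⟩
        exact fun a ha => ⟨hsub ha, hall a ha⟩
      · intro h
        exact ⟨fun {a} ha => (h ha).1, fun a ha => (h ha).2⟩
    have herase : p.parts.toFinset.filter (fun a => ∃ b ∈ p.parts, b < a)
        = p.parts.toFinset.erase m := by
      ext a
      simp only [Finset.mem_filter, Finset.mem_erase, Multiset.mem_toFinset]
      constructor
      · rintro ⟨ha, b, hb, hba⟩
        refine ⟨?_, ha⟩
        have := hmin b hb
        omega
      · rintro ⟨hne, ha⟩
        exact ⟨ha, m, hm, lt_of_le_of_ne (hmin a ha) (Ne.symm hne)⟩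
    rw [hset, herase, Finset.sum_const, Finset.card_powerset,
      Finset.card_erase_of_mem (Multiset.mem_toFinset.mpr hm), smul_eq_mul, mul_comm]
  · rw [if_neg hc]
    refine Finset.sum_eq_zero fun S _ => ?_
    rw [if_neg]
    exact fun h => hc h.2

/-- Facts about a partition all of whose parts are equal. -/
lemma const_partition_facts (n : ℕ) (hn : n ≠ 0) (p : Nat.Partition n)
    (h1 : p.parts.toFinset.card = 1) :
    p.parts.card ≠ 0 ∧ p.parts.card * (n / p.parts.card) = n ∧
      p.parts = Multiset.replicate p.parts.card (n / p.parts.card) := by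
  obtain ⟨m, hm⟩ := Finset.card_eq_one.mp h1
  have hall : ∀ b ∈ p.parts, b = m := by
    intro b hb
    have h := Multiset.mem_toFinset.mpr hb
    rw [hm, Finset.mem_singleton] at h
    exact h
  have hrep : p.parts = Multiset.replicate p.parts.card m :=
    Multiset.eq_replicate_card.mpr hall
  have hcard : p.parts.card ≠ 0 := by
    intro h
    have := p.parts_sum
    rw [Multiset.card_eq_zero.mp h] at this
    simp at this
    exact hn this.symm
  have hsum : p.parts.card * m = n := by
    have := p.parts_sum
    rw [hrep] at this
    simpa [Multiset.sum_replicate, smul_eq_mul] using this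
  have hsum' : m * p.parts.card = n := by rw [mul_comm]; exact hsum
  have hmm : m = n / p.parts.card :=
    (Nat.div_eq_of_eq_mul_left (Nat.pos_of_ne_zero hcard) hsum'.symm).symm
  refine ⟨hcard, ?_, ?_⟩
  · rw [← hmm]; exact hsum
  · rw [← hmm]; exact hrep

/-- Reduction of `sptbar2` modulo `2` to a divisor count. -/
lemma sptbar2_mod_two (n : ℕ) (hn : 1 ≤ n) :
    (sptbar2 n : ZMod 2)
      = ((n.divisors.filter fun k => Even (n / k) ∧ Odd k).card : ZMod 2) := by
  have hn0 : n ≠ 0 := by omega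
  unfold sptbar2
  rw [Nat.cast_sum]
  have h1 : ∀ p : Nat.Partition n,
      ((∑ S ∈ p.parts.toFinset.powerset,
        if (∀ a ∈ S, ∃ b ∈ p.parts, b < a) ∧
            (∃ a ∈ p.parts, (∀ b ∈ p.parts, a ≤ b) ∧ Even a) then
          numSmallest p.parts else 0 : ℕ) : ZMod 2)
      = if ((∃ a ∈ p.parts, (∀ b ∈ p.parts, a ≤ b) ∧ Even a) ∧ p.parts.toFinset.card = 1)
          then (p.parts.card : ZMod 2) else 0 := by
    intro p
    rw [inner_sum_eq n p]
    by_cases hc : ∃ a ∈ p.parts, (∀ b ∈ p.parts, a ≤ b) ∧ Even a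
    · rw [if_pos hc]
      by_cases hd : p.parts.toFinset.card = 1
      · rw [if_pos ⟨hc, hd⟩, hd]
        obtain ⟨_, _, hrep⟩ := const_partition_facts n hn0 p hd
        rw [hrep, numSmallest_replicate]
        simp
      · rw [if_neg fun h => hd h.2]
        have hpos : p.parts.toFinset.card ≠ 0 := by
          intro h
          have h0 : p.parts = 0 := by
            rw [← Multiset.toFinset_eq_empty, ← Finset.card_eq_zero, h]
          have := p.parts_sum
          rw [h0] at this
          simp at this
          exact hn0 this.symm
        have h2 : p.parts.toFinset.card - 1 ≠ 0 := by omega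
        push_cast
        rw [show (2 : ZMod 2) = 0 from by decide, zero_pow h2, mul_zero]
    · rw [if_neg hc, if_neg fun h => hc h.1]
      simp
  rw [Finset.sum_congr rfl fun p _ => h1 p, ← Finset.sum_filter]
  have hbij : (∑ p ∈ Finset.univ.filter
        (fun p : Nat.Partition n =>
          (∃ a ∈ p.parts, (∀ b ∈ p.parts, a ≤ b) ∧ Even a) ∧ p.parts.toFinset.card = 1),
        (p.parts.card : ZMod 2))
      = ∑ k ∈ n.divisors.filter (fun k => Even (n / k)), (k : ZMod 2) := by
    refine Finset.sum_bij' (fun p _ => p.parts.card)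
      (fun k hk => ⟨Multiset.replicate k (n / k), ?_, ?_⟩) ?_ ?_ ?_ ?_ ?_
    · intro i hi
      rw [Multiset.eq_of_mem_replicate hi]
      simp only [Finset.mem_filter, Nat.mem_divisors] at hk
      have hk0 : 0 < k :=
        Nat.pos_of_ne_zero fun h => hn0 (Nat.eq_zero_of_zero_dvd (h ▸ hk.1.1))
      exact Nat.div_pos (Nat.le_of_dvd (Nat.pos_of_ne_zero hn0) hk.1.1) hk0
    · simp only [Finset.mem_filter, Nat.mem_divisors] at hk
      rw [Multiset.sum_replicate, smul_eq_mul, Nat.mul_div_cancel' hk.1.1]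
    · -- hi : image is in divisors filter
      intro p hp
      simp only [Finset.mem_filter, Finset.mem_univ, true_and] at hp
      obtain ⟨hc, hd⟩ := hp
      obtain ⟨hcard, hmul, hrep⟩ := const_partition_facts n hn0 p hd
      simp only [Finset.mem_filter, Nat.mem_divisors]
      refine ⟨⟨⟨n / p.parts.card, hmul.symm⟩, hn0⟩, ?_⟩
      obtain ⟨a, ha, _, hea⟩ := hc
      have hae : a = n / Multiset.card p.parts := by
        rw [hrep] at ha
        exact Multiset.eq_of_mem_replicate ha
      rwa [hae] at hea
    · intro k hk
      simp only [Finset.mem_filter, Nat.mem_divisors] at hk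
      have hkpos : k ≠ 0 := by
        intro h
        exact hn0 (Nat.eq_zero_of_zero_dvd (h ▸ hk.1.1))
      simp only [Finset.mem_filter, Finset.mem_univ, true_and]
      constructor
      · refine ⟨n / k, Multiset.mem_replicate.mpr ⟨hkpos, rfl⟩, ?_, hk.2⟩
        intro b hb
        rw [Multiset.eq_of_mem_replicate hb]
      · rw [Multiset.toFinset_replicate, if_neg hkpos, Finset.card_singleton]
    · intro p hp
      simp only [Finset.mem_filter, Finset.mem_univ, true_and] at hp
      obtain ⟨_, hrep⟩ := (const_partition_facts n hn0 p hp.2).2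
      exact Nat.Partition.ext hrep.symm
    · intro k hk
      simp [Multiset.card_replicate]
    · intro p hp
      rfl
  rw [hbij]
  have h2 : ∀ k ∈ n.divisors.filter (fun k => Even (n / k)),
      (k : ZMod 2) = if Odd k then (1 : ZMod 2) else 0 := by
    intro k _
    by_cases hk : Odd k
    · rw [if_pos hk, ZMod.natCast_eq_one_iff_odd.mpr hk]
    · rw [if_neg hk]
      by_contra h
      exact hk (ZMod.natCast_ne_zero_iff_odd.mp h)
  rw [Finset.sum_congr rfl h2, ← Finset.sum_filter, Finset.filter_filter,
    Finset.sum_const, nsmul_eq_mul, mul_one]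

/-- A positive natural number has an odd number of divisors iff it is a square. -/
lemma odd_card_divisors_iff (q : ℕ) (hq : q ≠ 0) : Odd q.divisors.card ↔ IsSquare q := by
  rw [Nat.card_divisors hq, ← Nat.support_factorization]
  have key : Odd (∏ p ∈ q.factorization.support, (q.factorization p + 1))
      ↔ ∀ p ∈ q.factorization.support, Even (q.factorization p) := by
    constructor
    · intro h p hp
      by_contra hodd
      rw [Nat.not_even_iff_odd] at hodd
      have h2 : 2 ∣ q.factorization p + 1 := by
        obtain ⟨t, ht⟩ := hodd
        omega
      have : 2 ∣ ∏ p ∈ q.factorization.support, (q.factorization p + 1) :=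
        h2.trans (Finset.dvd_prod_of_mem _ hp)
      rw [Nat.odd_iff] at h
      omega
    · intro h
      refine Finset.prod_induction _ Odd (fun a b => Odd.mul) odd_one ?_
      intro p hp
      exact Even.add_one (h p hp)
  rw [key]
  constructor
  · intro h
    refine ⟨∏ p ∈ q.factorization.support, p ^ (q.factorization p / 2), ?_⟩
    conv_lhs => rw [← Nat.factorization_prod_pow_eq_self hq]
    rw [← Finset.prod_mul_distrib]
    show (∏ p ∈ q.factorization.support, p ^ q.factorization p) = _
    refine Finset.prod_congr rfl fun p hp => ?_
    rw [← pow_add]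
    congr 1
    obtain ⟨t, ht⟩ := h p hp
    omega
  · rintro ⟨r, hr⟩ p hp
    have hr0 : r ≠ 0 := by
      intro h
      rw [h, mul_zero] at hr
      exact hq hr
    rw [hr, Nat.factorization_mul hr0 hr0, Finsupp.add_apply]
    exact ⟨_, rfl⟩

lemma filter_divisors_eq (n : ℕ) (hn0 : n ≠ 0) (hev : Even n) :
    n.divisors.filter (fun k => Even (n / k) ∧ Odd k) = (ordCompl[2] n).divisors := by
  have hq0 : ordCompl[2] n ≠ 0 := (Nat.ordCompl_pos 2 hn0).ne'
  have hqodd : ¬ 2 ∣ ordCompl[2] n := Nat.not_dvd_ordCompl Nat.prime_two hn0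
  ext k
  simp only [Finset.mem_filter, Nat.mem_divisors]
  constructor
  · rintro ⟨⟨hkn, _⟩, _, hkodd⟩
    refine ⟨?_, hq0⟩
    have hcop : Nat.Coprime k (2 ^ n.factorization 2) := by
      exact Nat.Coprime.pow_right _ (Nat.coprime_two_right.mpr hkodd)
    have hself := Nat.ordProj_mul_ordCompl_eq_self n 2
    rw [mul_comm] at hself
    refine hcop.dvd_of_dvd_mul_right ?_
    rwa [hself]
  · rintro ⟨hkq, _⟩
    have hkn : k ∣ n := hkq.trans (Nat.ordCompl_dvd n 2)
    have hkodd : Odd k := by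
      rcases Nat.even_or_odd k with h | h
      · exact absurd (h.two_dvd.trans hkq) hqodd
      · exact h
    refine ⟨⟨hkn, hn0⟩, ?_, hkodd⟩
    have hdvd : 2 ∣ n / k := by
      rw [Nat.dvd_div_iff_mul_dvd hkn]
      exact (Nat.coprime_two_right.mpr hkodd).mul_dvd_of_dvd_of_dvd hkn hev.two_dvd
    obtain ⟨t, ht⟩ := hdvd
    exact ⟨t, by omega⟩

lemma isSquare_ordCompl_iff (n : ℕ) (hn0 : n ≠ 0) (hev : Even n) :
    IsSquare (ordCompl[2] n) ↔ (∃ k, Even n ∧ n = k ^ 2) ∨ (∃ k, n = 2 * k ^ 2) := by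
  constructor
  · rintro ⟨r, hr⟩
    have ha : 1 ≤ n.factorization 2 :=
      Nat.Prime.factorization_pos_of_dvd Nat.prime_two hn0 hev.two_dvd
    have hself : 2 ^ n.factorization 2 * ordCompl[2] n = n :=
      Nat.ordProj_mul_ordCompl_eq_self n 2
    set a := n.factorization 2 with ha_def
    rcases Nat.even_or_odd a with he | ho
    · left
      refine ⟨2 ^ (a / 2) * r, hev, ?_⟩
      rw [mul_pow, ← pow_mul, Nat.div_mul_cancel he.two_dvd, sq, ← hr, hself]
    · right
      refine ⟨2 ^ (a / 2) * r, ?_⟩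
      have h2a : a = a / 2 * 2 + 1 := by
        obtain ⟨t, ht⟩ := ho
        omega
      rw [← hself, hr, mul_pow, ← pow_mul]
      conv_lhs => rw [h2a]
      rw [pow_succ, sq]
      ring
  · rintro (⟨k, _, hk⟩ | ⟨k, hk⟩)
    · rw [hk, sq, Nat.ordCompl_mul]
      exact ⟨_, rfl⟩
    · rw [hk, sq, ← mul_assoc, Nat.ordCompl_mul, Nat.ordCompl_mul]
      have h22 : ordCompl[2] 2 = 1 := by
        rw [Nat.Prime.factorization_self Nat.prime_two]
        norm_num
      rw [h22, one_mul]
      exact ⟨_, rfl⟩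

theorem sptbar2_odd_iff (n : ℕ) (hn : 1 ≤ n) :
    Odd (sptbar2 n) ↔ (∃ k, Even n ∧ n = k ^ 2) ∨ (∃ k, n = 2 * k ^ 2) := by
  have hn0 : n ≠ 0 := by omega
  rw [← ZMod.natCast_eq_one_iff_odd, sptbar2_mod_two n hn, ZMod.natCast_eq_one_iff_odd]
  by_cases hev : Even n
  · rw [filter_divisors_eq n hn0 hev,
      odd_card_divisors_iff _ (Nat.ordCompl_pos 2 hn0).ne']
    exact isSquare_ordCompl_iff n hn0 hev
  · constructor
    · intro h
      exfalso
      have hempty : n.divisors.filter (fun k => Even (n / k) ∧ Odd k) = ∅ := by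
        refine Finset.filter_false_of_mem ?_
        rintro k hk ⟨hek, _⟩
        rw [Nat.mem_divisors] at hk
        apply hev
        rw [← Nat.div_mul_cancel hk.1]
        exact hek.mul_right _
      rw [hempty] at h
      simp [Nat.odd_iff] at h
    · rintro (⟨k, hke, _⟩ | ⟨k, hk⟩)
      · exact absurd hke hev
      · exact absurd (hk ▸ ⟨k ^ 2, by ring⟩ : Even n) hev
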